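/- Let d ≥ 1 and let F = ℂ⟨v₁,…,v_d⟩ be the free associative ℂ-algebra on d generators of degree 1, with F[n] the span of words of length n. Let [F,F] be the ℂ-linear span of all commutators ab − ba (a, b ∈ F), a graded subspace of F. Then for every n ≥ 1, dim_ℂ ( F[n] / (F[n] ∩ [F,F]) ) = (1/n) · Σ_{k | n} φ(k) · d^{n/k}, where φ is Euler's totient function and the sum is over positive divisors k of n; this is the number of cyclic words (necklaces) of length n in d letters. -/

import Mathlib

noncomputable section

/-- The product in the free algebra of the generators listed by `l`. -/
def wordProd {N : ℕ} (l : List (Fin N)) : FreeAlgebra ℂ (Fin N) :=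
  (l.map (FreeAlgebra.ι ℂ)).prod

/-- The weight-`m` graded component of the free algebra on `Fin N`, where the generator `k`
has degree `d k`: the span of the products of generators whose degrees sum to `m`. -/
def wt {N : ℕ} (d : Fin N → ℕ) (m : ℕ) : Submodule ℂ (FreeAlgebra ℂ (Fin N)) :=
  Submodule.span ℂ {x | ∃ l : List (Fin N), (l.map d).sum = m ∧ x = wordProd l}

/-- The linear span of all commutators `a*b − b*a` in an algebra `A`. -/
def commSpan (A : Type*) [Ring A] [Algebra ℂ A] : Submodule ℂ A :=
  Submodule.span ℂ {x | ∃ a b : A, x = a * b - b * a}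

open Finset
section Aux

namespace Stmt17

instance necklaceAction (d n : ℕ) : AddAction (ZMod n) (ZMod n → Fin d) where
  vadd a f := fun x => f (x + a)
  zero_vadd f := by funext x; show f (x + 0) = f x; rw [add_zero]
  add_vadd a b f := by
    funext x; show f (x + (a + b)) = f ((x + a) + b); rw [add_assoc]

lemma vadd_apply {d n : ℕ} (a : ZMod n) (f : ZMod n → Fin d) (x : ZMod n) :
    (a +ᵥ f) x = f (x + a) := rfl

/-- fixed points of translation by `a` biject with functions on the quotient -/
def fixedEquiv (d n : ℕ) (a : ZMod n) :
    AddAction.fixedBy (ZMod n → Fin d) a ≃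
      ((ZMod n ⧸ AddSubgroup.zmultiples a) → Fin d) where
  toFun := fun fh q => Quotient.liftOn' q fh.1 (by
    intro x y hxy
    obtain ⟨f, hf⟩ := fh
    show f x = f y
    rw [QuotientAddGroup.leftRel_apply] at hxy
    have h2 : (-x + y) +ᵥ f = f := vadd_eq_self_of_mem_zmultiples hxy hf
    have h4 := congrFun h2 x
    rw [vadd_apply] at h4
    have h3 : x + (-x + y) = y := by abel
    rw [h3] at h4
    exact h4.symm)
  invFun := fun g => ⟨g ∘ QuotientAddGroup.mk, by
    show (a +ᵥ (g ∘ QuotientAddGroup.mk)) = _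
    funext x
    rw [vadd_apply]
    show g _ = g _
    congr 1
    rw [QuotientAddGroup.eq]
    have h : -(x + a) + x = -a := by abel
    rw [h]
    exact AddSubgroup.neg_mem _ (AddSubgroup.mem_zmultiples a)⟩
  left_inv := fun fh => rfl
  right_inv := fun g => by
    funext q
    induction q using QuotientAddGroup.induction_on
    rfl

lemma card_fixedBy (d n : ℕ) (hn : n ≠ 0) (a : ZMod n) :
    Nat.card (AddAction.fixedBy (ZMod n → Fin d) a) = d ^ (n.gcd a.val) := by
  haveI : NeZero n := ⟨hn⟩
  rw [Nat.card_congr (fixedEquiv d n a), Nat.card_fun, Nat.card_eq_fintype_card (α := Fin d),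
    Fintype.card_fin]
  congr 1
  have h1 : Nat.card (ZMod n) = Nat.card (ZMod n ⧸ AddSubgroup.zmultiples a)
      * Nat.card (AddSubgroup.zmultiples a) :=
    AddSubgroup.card_eq_card_quotient_mul_card_addSubgroup _
  rw [Nat.card_zmultiples] at h1
  have h2 : Nat.card (ZMod n) = n := Nat.card_zmod n
  have ha : ((a.val : ℕ) : ZMod n) = a := ZMod.natCast_rightInverse a
  have h3 : addOrderOf a = n / n.gcd a.val := by
    conv_lhs => rw [← ha]
    exact ZMod.addOrderOf_coe a.val hn
  rw [h2, h3] at h1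
  have hg : n.gcd a.val ∣ n := Nat.gcd_dvd_left _ _
  have hgpos : 0 < n.gcd a.val := Nat.gcd_pos_of_pos_left _ (by omega)
  have hpos : 0 < n / n.gcd a.val := Nat.div_pos (Nat.le_of_dvd (by omega) hg) hgpos
  have := Nat.div_eq_of_eq_mul_left hpos h1
  rw [Nat.div_div_self hg hn] at this
  exact this.symm


lemma card_gcd_fiber {n m : ℕ} (hn : n ≠ 0) (hm : m ∣ n) :
    ({j ∈ range n | n.gcd j = m}).card = Nat.totient (n / m) := by
  have hm0 : m ≠ 0 := by rintro rfl; exact hn (Nat.zero_dvd.mp hm)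
  rw [Nat.totient_eq_card_coprime]
  apply Finset.card_bij' (fun j _ => j / m) (fun i _ => m * i)
  · intro j hj
    simp only [mem_filter, mem_range] at hj ⊢
    obtain ⟨hjn, hgcd⟩ := hj
    have hmj : m ∣ j := hgcd ▸ Nat.gcd_dvd_right n j
    refine ⟨Nat.div_lt_div_of_lt_of_dvd hm hjn, ?_⟩
    have := Nat.coprime_div_gcd_div_gcd (m := n) (n := j) (by omega : 0 < n.gcd j)
    rwa [hgcd] at this
  · intro i hi
    simp only [mem_filter, mem_range] at hi ⊢
    obtain ⟨hin, hcop⟩ := hi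
    constructor
    · calc m * i < m * (n / m) := (Nat.mul_lt_mul_left (by omega : 0 < m)).mpr hin
        _ = n := Nat.mul_div_cancel' hm
    · conv_lhs => rw [← Nat.mul_div_cancel' hm]
      rw [Nat.gcd_mul_left, Nat.Coprime.gcd_eq_one hcop, mul_one]
  · intro j hj
    simp only [mem_filter, mem_range] at hj
    exact Nat.mul_div_cancel' (hj.2 ▸ Nat.gcd_dvd_right n j)
  · intro i _
    exact Nat.mul_div_cancel_left i (by omega)

lemma gcd_pow_sum (n d : ℕ) (hn : n ≠ 0) :
    ∑ j ∈ range n, d ^ (n.gcd j) = ∑ k ∈ n.divisors, Nat.totient k * d ^ (n / k) := by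
  rw [← Nat.sum_div_divisors n (fun k => Nat.totient k * d ^ (n / k))]
  rw [← Finset.sum_fiberwise_of_maps_to (g := fun j => n.gcd j) (t := n.divisors)
      (fun j _ => Nat.mem_divisors.mpr ⟨Nat.gcd_dvd_left n j, hn⟩)]
  refine Finset.sum_congr rfl fun m hm => ?_
  have hmn : m ∣ n := (Nat.mem_divisors.mp hm).1
  have : ∑ j ∈ {j ∈ range n | n.gcd j = m}, d ^ n.gcd j
      = ∑ j ∈ {j ∈ range n | n.gcd j = m}, d ^ m := by
    refine Finset.sum_congr rfl fun j hj => ?_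
    rw [(Finset.mem_filter.mp hj).2]
  rw [this, Finset.sum_const, card_gcd_fiber hn hmn, smul_eq_mul,
    Nat.div_div_self hmn hn]

lemma burnside (d n : ℕ) (hn : n ≠ 0) :
    Nat.card (AddAction.orbitRel.Quotient (ZMod n) (ZMod n → Fin d)) * n
      = ∑ k ∈ n.divisors, Nat.totient k * d ^ (n / k) := by
  haveI : NeZero n := ⟨hn⟩
  haveI : ∀ a : ZMod n, Fintype (AddAction.fixedBy (ZMod n → Fin d) a) :=
    fun a => Fintype.ofFinite _
  haveI : Finite (AddAction.orbitRel.Quotient (ZMod n) (ZMod n → Fin d)) :=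
    Quotient.finite _
  haveI : Fintype (AddAction.orbitRel.Quotient (ZMod n) (ZMod n → Fin d)) :=
    Fintype.ofFinite _
  have hb := AddAction.sum_card_fixedBy_eq_card_orbits_mul_card_addGroup (ZMod n)
    (ZMod n → Fin d)
  rw [ZMod.card n] at hb
  have hL : (∑ a : ZMod n, Fintype.card (AddAction.fixedBy (ZMod n → Fin d) a))
      = ∑ j ∈ range n, d ^ (n.gcd j) := by
    rw [← Finset.sum_bij (fun (a : ZMod n) _ => a.val)]
    · intro a _; exact Finset.mem_range.mpr (ZMod.val_lt a)
    · intro a _ b _ hab; exact ZMod.val_injective n hab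
    · intro j hj
      exact ⟨(j : ZMod n), Finset.mem_univ _, ZMod.val_natCast_of_lt (Finset.mem_range.mp hj)⟩
    · intro a _
      rw [← Nat.card_eq_fintype_card, card_fixedBy d n hn a]
  rw [hL] at hb
  rw [← Nat.card_eq_fintype_card] at hb
  rw [← hb]
  exact gcd_pow_sum n d hn

end Stmt17

namespace Stmt17

variable (d n : ℕ)

/-- the cyclic function associated to a list -/
def cyc (hd : 1 ≤ d) (l : List (Fin d)) : ZMod n → Fin d :=
  fun x => l.getD x.val ⟨0, hd⟩

/-- the word associated to a cyclic function -/
def word (f : ZMod n → Fin d) : List (Fin d) :=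
  List.ofFn (fun i : Fin n => f (i.val : ZMod n))

variable {d n}

lemma word_length (f : ZMod n → Fin d) : (word d n f).length = n := by
  simp [word]

lemma cyc_word [NeZero n] (hd : 1 ≤ d) (f : ZMod n → Fin d) :
    cyc d n hd (word d n f) = f := by
  funext x
  have hx : x.val < (word d n f).length := by rw [word_length]; exact ZMod.val_lt x
  rw [cyc, List.getD_eq_getElem _ _ hx]
  simp only [word, List.getElem_ofFn]
  congr 1
  exact ZMod.natCast_rightInverse x

lemma word_cyc [NeZero n] (hd : 1 ≤ d) {l : List (Fin d)} (hl : l.length = n) :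
    word d n (cyc d n hd l) = l := by
  apply List.ext_getElem
  · rw [word_length, hl]
  · intro i h1 h2
    rw [word_length] at h1
    simp only [word, List.getElem_ofFn, cyc]
    rw [ZMod.val_natCast_of_lt h1, List.getD_eq_getElem _ _ h2]

lemma cyc_rotate [NeZero n] (hd : 1 ≤ d) {l : List (Fin d)} (hl : l.length = n) (k : ℕ) :
    cyc d n hd (l.rotate k) = (k : ZMod n) +ᵥ cyc d n hd l := by
  funext x
  have hx : x.val < (l.rotate k).length := by
    rw [List.length_rotate, hl]; exact ZMod.val_lt x
  rw [vadd_apply, cyc, cyc, List.getD_eq_getElem _ _ hx, List.getElem_rotate]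
  have hy : (x + (k : ZMod n)).val < l.length := by rw [hl]; exact ZMod.val_lt _
  rw [List.getD_eq_getElem _ _ hy]
  congr 1
  rw [ZMod.val_add, ZMod.val_natCast, hl, Nat.add_mod_mod]

end Stmt17

namespace Stmt17

lemma equiv_wordProd {N : ℕ} (l : List (Fin N)) :
    FreeAlgebra.equivMonoidAlgebraFreeMonoid (wordProd l)
      = MonoidAlgebra.single (FreeMonoid.ofList l) 1 := by
  induction l with
  | nil =>
    show FreeAlgebra.equivMonoidAlgebraFreeMonoid (1 : FreeAlgebra ℂ (Fin N)) = _
    rw [map_one, MonoidAlgebra.one_def]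
    rfl
  | cons a l ih =>
    have h1 : wordProd (a :: l) = FreeAlgebra.ι ℂ a * wordProd l := by
      simp [wordProd]
    rw [h1, map_mul, ih]
    have h2 : FreeAlgebra.equivMonoidAlgebraFreeMonoid (FreeAlgebra.ι ℂ a)
        = MonoidAlgebra.single (FreeMonoid.of a) 1 := by
      simp [FreeAlgebra.equivMonoidAlgebraFreeMonoid]
    rw [h2, MonoidAlgebra.single_mul_single, one_mul]
    rfl

lemma basis_eq_wordProd {N : ℕ} (m : FreeMonoid (Fin N)) :
    (FreeAlgebra.basisFreeMonoid ℂ (Fin N)) m = wordProd m.toList := by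
  rw [FreeAlgebra.basisFreeMonoid]
  simp only [Module.Basis.map_apply]
  apply (FreeAlgebra.equivMonoidAlgebraFreeMonoid (R := ℂ) (X := Fin N)).toLinearEquiv.injective
  rw [LinearEquiv.trans_symm, LinearEquiv.trans_apply]
  erw [LinearEquiv.apply_symm_apply]
  show _ = FreeAlgebra.equivMonoidAlgebraFreeMonoid (wordProd m.toList)
  rw [equiv_wordProd, FreeMonoid.ofList_toList]
  simp [Finsupp.basisSingleOne]

end Stmt17

namespace Stmt17

lemma wordProd_append {N : ℕ} (l₁ l₂ : List (Fin N)) :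
    wordProd (l₁ ++ l₂) = wordProd l₁ * wordProd l₂ := by
  rw [wordProd, wordProd, wordProd, List.map_append, List.prod_append]

lemma wt_eq (d n : ℕ) :
    wt (fun _ : Fin d => 1) n
      = Submodule.span ℂ {x | ∃ l : List (Fin d), l.length = n ∧ x = wordProd l} := by
  rw [wt]
  congr 1
  ext x
  have h : ∀ l : List (Fin d), (l.map (fun _ => (1:ℕ))).sum = l.length := by
    intro l; induction l with
    | nil => simp
    | cons a l ih => simp [ih, Nat.add_comm]
  constructor
  · rintro ⟨l, h1, h2⟩; exact ⟨l, by rw [← h l]; exact h1, h2⟩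
  · rintro ⟨l, h1, h2⟩; exact ⟨l, by rw [h l]; exact h1, h2⟩

variable (d n : ℕ) [NeZero n]

abbrev Q := AddAction.orbitRel.Quotient (ZMod n) (ZMod n → Fin d)

noncomputable instance : Fintype (Q d n) :=
  have : Finite (Q d n) := Quotient.finite _
  Fintype.ofFinite _

noncomputable instance : DecidableEq (Q d n) := Classical.decEq _

variable {d n}

/-- class of the cyclic word of a list -/
def qcyc (hd : 1 ≤ d) (l : List (Fin d)) : Q d n :=
  Quotient.mk (AddAction.orbitRel (ZMod n) (ZMod n → Fin d)) (cyc d n hd l)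

lemma qcyc_rotate (hd : 1 ≤ d) {l : List (Fin d)} (hl : l.length = n) (k : ℕ) :
    (qcyc hd (l.rotate k) : Q d n) = qcyc hd l := by
  apply Quotient.sound
  exact AddAction.orbitRel_apply.mpr (by
    rw [cyc_rotate hd hl k]; exact AddAction.mem_orbit _ _)

variable (d n)

/-- the counting linear map -/
def Tmap (hd : 1 ≤ d) : FreeAlgebra ℂ (Fin d) →ₗ[ℂ] (Q d n → ℂ) :=
  (FreeAlgebra.basisFreeMonoid ℂ (Fin d)).constr ℂ
    (fun m => if m.toList.length = n then Pi.single (qcyc hd m.toList) 1 else 0)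

variable {d n}

lemma Tmap_wordProd (hd : 1 ≤ d) (l : List (Fin d)) :
    Tmap d n hd (wordProd l)
      = if l.length = n then Pi.single (qcyc hd l) 1 else 0 := by
  have h : wordProd l = (FreeAlgebra.basisFreeMonoid ℂ (Fin d)) (FreeMonoid.ofList l) := by
    rw [basis_eq_wordProd, FreeMonoid.toList_ofList]
  rw [h, Tmap, Module.Basis.constr_basis, FreeMonoid.toList_ofList]

lemma sameOrbit_diff_mem (hd : 1 ≤ d) {l₁ l₂ : List (Fin d)} (h₁ : l₁.length = n)
    (h₂ : l₂.length = n) (h : (qcyc hd l₁ : Q d n) = qcyc hd l₂) :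
    wordProd l₁ - wordProd l₂ ∈ commSpan (FreeAlgebra ℂ (Fin d)) := by
  obtain ⟨g, hg0⟩ := AddAction.orbitRel_apply.mp (Quotient.exact h)
  have hg : g +ᵥ cyc d n hd l₂ = cyc d n hd l₁ := hg0
  have hrot : l₂.rotate g.val = l₁ := by
    have : cyc d n hd (l₂.rotate g.val) = cyc d n hd l₁ := by
      rw [cyc_rotate hd h₂, ZMod.natCast_rightInverse g, hg]
    have h3 := congrArg (word d n) this
    rwa [word_cyc hd (by rw [List.length_rotate]; exact h₂), word_cyc hd h₁] at h3
  rw [← hrot, List.rotate_eq_drop_append_take_mod]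
  have hc : wordProd (l₂.drop (g.val % l₂.length) ++ l₂.take (g.val % l₂.length))
      - wordProd (l₂.take (g.val % l₂.length) ++ l₂.drop (g.val % l₂.length))
      ∈ commSpan (FreeAlgebra ℂ (Fin d)) := by
    rw [wordProd_append, wordProd_append]
    exact Submodule.subset_span ⟨_, _, rfl⟩
  rwa [List.take_append_drop] at hc

end Stmt17

namespace Stmt17

variable {d n : ℕ} [NeZero n]

lemma Tmap_mul_comm (hd : 1 ≤ d) (a b : FreeAlgebra ℂ (Fin d)) :
    Tmap d n hd (a * b) = Tmap d n hd (b * a) := by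
  let F := FreeAlgebra ℂ (Fin d)
  let L₁ : F →ₗ[ℂ] F →ₗ[ℂ] (Q d n → ℂ) :=
    (LinearMap.mul ℂ F).compr₂ (Tmap d n hd)
  let L₂ : F →ₗ[ℂ] F →ₗ[ℂ] (Q d n → ℂ) :=
    ((LinearMap.mul ℂ F).flip).compr₂ (Tmap d n hd)
  have key : L₁ = L₂ := by
    apply (FreeAlgebra.basisFreeMonoid ℂ (Fin d)).ext
    intro u
    apply (FreeAlgebra.basisFreeMonoid ℂ (Fin d)).ext
    intro v
    show Tmap d n hd (_ * _) = Tmap d n hd (_ * _)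
    rw [basis_eq_wordProd, basis_eq_wordProd, ← wordProd_append, ← wordProd_append,
      Tmap_wordProd, Tmap_wordProd]
    by_cases hlen : (u.toList ++ v.toList).length = n
    · have hlen' : (v.toList ++ u.toList).length = n := by
        rw [List.length_append] at hlen ⊢; omega
      rw [if_pos hlen, if_pos hlen']
      congr 1
      have : (u.toList ++ v.toList).rotate u.toList.length = v.toList ++ u.toList :=
        List.rotate_append_length_eq _ _
      rw [← this, qcyc_rotate hd hlen]
    · have hlen' : ¬ (v.toList ++ u.toList).length = n := by
        rw [List.length_append] at hlen ⊢; omega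
      rw [if_neg hlen, if_neg hlen']
  exact congrArg (fun (L : F →ₗ[ℂ] F →ₗ[ℂ] (Q d n → ℂ)) => L a b) key

lemma commSpan_le_ker (hd : 1 ≤ d) :
    commSpan (FreeAlgebra ℂ (Fin d)) ≤ LinearMap.ker (Tmap d n hd) := by
  rw [commSpan, Submodule.span_le]
  rintro x ⟨a, b, rfl⟩
  simp only [SetLike.mem_coe, LinearMap.mem_ker, map_sub, Tmap_mul_comm hd a b, sub_self]

variable (d n)

/-- right inverse sending an orbit to its representative word -/
def Rmap (hd : 1 ≤ d) : (Q d n → ℂ) →ₗ[ℂ] FreeAlgebra ℂ (Fin d) :=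
  (Pi.basisFun ℂ (Q d n)).constr ℂ (fun q => wordProd (word d n q.out))

variable {d n}

lemma key_lemma (hd : 1 ≤ d) :
    wt (fun _ : Fin d => 1) n ≤
      Submodule.comap (LinearMap.id - (Rmap d n hd).comp (Tmap d n hd))
        (commSpan (FreeAlgebra ℂ (Fin d))) := by
  rw [wt_eq, Submodule.span_le]
  rintro x ⟨l, hl, rfl⟩
  simp only [SetLike.mem_coe, Submodule.mem_comap, LinearMap.sub_apply, LinearMap.id_apply,
    LinearMap.comp_apply]
  rw [Tmap_wordProd, if_pos hl]
  have hsingle : (Pi.single (qcyc hd l) (1:ℂ) : Q d n → ℂ)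
      = (Pi.basisFun ℂ (Q d n)) (qcyc hd l) := by
    rw [Pi.basisFun_apply]
  rw [hsingle, Rmap, Module.Basis.constr_basis]
  apply sameOrbit_diff_mem hd hl (word_length _)
  rw [show (qcyc hd (word d n (qcyc hd l : Q d n).out) : Q d n)
      = Quotient.mk _ (cyc d n hd (word d n (qcyc hd l : Q d n).out)) from rfl,
    cyc_word hd, Quotient.out_eq]

end Stmt17

section Main

open Stmt17

theorem stmt_17' (d : ℕ) (hd : 1 ≤ d) (n : ℕ) (hn : 1 ≤ n)
    (hb : Nat.card (Q d n) * n = ∑ k ∈ n.divisors, Nat.totient k * d ^ (n / k)) :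
    (Module.finrank ℂ
        ((wt (fun _ : Fin d => 1) n) ⧸
          ((commSpan (FreeAlgebra ℂ (Fin d))).comap (wt (fun _ : Fin d => 1) n).subtype)))
        * n
      = ∑ k ∈ n.divisors, Nat.totient k * d ^ (n / k) := by
  haveI : NeZero n := ⟨by omega⟩
  set W := wt (fun _ : Fin d => 1) n with hW
  set T' := (Tmap d n hd).comp W.subtype with hT'
  have hsurj : Function.Surjective T' := by
    rw [← LinearMap.range_eq_top, ← top_le_iff, ← (Pi.basisFun ℂ (Q d n)).span_eq,
      Submodule.span_le]
    rintro x ⟨q, rfl⟩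
    have hmem : wordProd (word d n q.out) ∈ W := by
      rw [hW, wt_eq]; exact Submodule.subset_span ⟨word d n q.out, word_length _, rfl⟩
    refine ⟨⟨wordProd (word d n q.out), hmem⟩, ?_⟩
    show Tmap d n hd (wordProd (word d n q.out)) = _
    rw [Tmap_wordProd, if_pos (word_length _), Pi.basisFun_apply]
    have hq : (qcyc hd (word d n q.out) : Q d n) = q := by
      show Quotient.mk _ (cyc d n hd (word d n q.out)) = q
      rw [cyc_word hd, Quotient.out_eq]
    rw [hq]
  have hker : LinearMap.ker T' = (commSpan (FreeAlgebra ℂ (Fin d))).comap W.subtype := by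
    ext x
    simp only [LinearMap.mem_ker, LinearMap.comp_apply, Submodule.mem_comap,
      Submodule.subtype_apply]
    constructor
    · intro hx
      have hkey := key_lemma (n := n) hd x.2
      simp only [Submodule.mem_comap, LinearMap.sub_apply, LinearMap.id_apply,
        LinearMap.comp_apply] at hkey
      have hxv : Tmap d n hd x.val = 0 := hx
      rw [hxv, map_zero, sub_zero] at hkey
      exact hkey
    · intro hx
      exact LinearMap.mem_ker.mp (commSpan_le_ker hd hx)
  have e : (W ⧸ ((commSpan (FreeAlgebra ℂ (Fin d))).comap W.subtype)) ≃ₗ[ℂ] (Q d n → ℂ) :=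
    (Submodule.quotEquivOfEq _ _ hker.symm).trans (T'.quotKerEquivOfSurjective hsurj)
  rw [e.finrank_eq, Module.finrank_pi, ← Nat.card_eq_fintype_card]
  exact hb

end Main

end Aux

/-- STATEMENT 17: for the free algebra `F = ℂ⟨v₁,…,v_d⟩` with generators of degree 1,
`dim (F[n]/(F[n] ∩ [F,F])) · n = Σ_{k ∣ n} φ(k) · d^{n/k}`, the number of necklaces of
length `n` in `d` letters (times `n`). -/
theorem stmt_17 (d : ℕ) (hd : 1 ≤ d) (n : ℕ) (hn : 1 ≤ n) :
    (Module.finrank ℂ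
        ((wt (fun _ : Fin d => 1) n) ⧸
          ((commSpan (FreeAlgebra ℂ (Fin d))).comap (wt (fun _ : Fin d => 1) n).subtype)))
        * n
      = ∑ k ∈ n.divisors, Nat.totient k * d ^ (n / k) := by
  have hb := Stmt17.burnside d n (by omega)
  exact stmt_17' d hd n hn hb

end
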